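/- For any threshold graph G on n ≥ 3 vertices, τ(G) = ∏_{i=2}^{n-1} |{v ∈ V : deg(v) ≥ i}|, where τ(G) is the number of spanning trees of G. -/

import Mathlib

def IsThreshold {V : Type*} (G : SimpleGraph V) : Prop :=
  ∃ (φ : V → ℝ) (α : ℝ), ∀ u v : V, u ≠ v → (G.Adj u v ↔ α ≤ φ u + φ v)

noncomputable def spanningTreeCount {V : Type*} (G : SimpleGraph V) : ℕ :=
  {H : SimpleGraph V | H ≤ G ∧ H.IsTree}.ncard

namespace ThresholdAux
open Function SimpleGraph Finset

/-- rooted colored spanning forests, encoded by parent maps and colorings -/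
def CfgSet {V : Type*} (G : SimpleGraph V) (t : ℕ) :
    Set ((V → V) × (V → Fin t)) :=
  {pg | (∀ v, pg.1 v = v ∨ G.Adj v (pg.1 v)) ∧
        (∀ v, ∃ k, pg.1 (pg.1^[k] v) = pg.1^[k] v) ∧
        (∀ v, pg.2 (pg.1 v) = pg.2 v)}

/-- spanning trees rooted at `u`, encoded by parent maps -/
def TreeSet {V : Type*} (G : SimpleGraph V) (u : V) : Set (V → V) :=
  {p | (∀ v, p v = v ∨ G.Adj v (p v)) ∧ p u = u ∧ ∀ v, ∃ k, p^[k] v = u}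

section iterates
variable {V : Type*} {p : V → V} {v : V} {i : ℕ}

lemma fixed_of_cycle (hg : ∃ k, p (p^[k] v) = p^[k] v) (hc : p^[i] v = v)
    (hi : 0 < i) : p v = v := by
  obtain ⟨k, hk⟩ := hg
  have hfix : ∀ b, p^[k + b] v = p^[k] v := by
    intro b
    induction b with
    | zero => rfl
    | succ b ih =>
      have h1 : k + (b+1) = (k+b) + 1 := by ring
      rw [h1, Function.iterate_succ_apply', ih, hk]
  have hcyc : ∀ a, p^[a * i] v = v := by
    intro a
    induction a with
    | zero => simp
    | succ a ih => rw [Nat.succ_mul, Function.iterate_add_apply, hc, ih]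
  have h2 : k ≤ (k+1) * i := by nlinarith
  obtain ⟨b, hb⟩ := Nat.exists_eq_add_of_le h2
  have hv : v = p^[k] v := by
    conv_lhs => rw [← hcyc (k+1)]
    rw [hb, hfix b]
  have h3 := congrArg p hv
  rw [hk] at h3
  rw [h3, ← hv]

lemma reaches_fixed (hu : p v = v) (k : ℕ) : p^[k] v = v := Function.iterate_fixed hu k

lemma color_const {t : ℕ} {γ : V → Fin t} (hγ : ∀ v, γ (p v) = γ v) (k : ℕ) (v : V) :
    γ (p^[k] v) = γ v := by
  induction k with
  | zero => rfl
  | succ k ih => rw [Function.iterate_succ_apply', hγ, ih]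

end iterates

section del
variable {m : ℕ} (u : Fin (m+1)) (G : SimpleGraph (Fin (m+1)))

/-- vertex deletion -/
def Gdel : SimpleGraph (Fin m) := G.comap (u.succAbove ·)

instance [inst : DecidableRel G.Adj] : DecidableRel (Gdel u G).Adj :=
  fun a b => inst (u.succAbove a) (u.succAbove b)

lemma Gdel_adj {a b : Fin m} : (Gdel u G).Adj a b ↔ G.Adj (u.succAbove a) (u.succAbove b) :=
  Iff.rfl

variable {u}

lemma up_cases (v : Fin (m+1)) : u = v ∨ ∃ j, v = u.succAbove j := by
  rcases eq_or_ne v u with h | h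
  · exact Or.inl h.symm
  · obtain ⟨j, hj⟩ := Fin.exists_succAbove_eq h
    exact Or.inr ⟨j, hj.symm⟩

/-- deletion of a parent map -/
def del (u : Fin (m+1)) (p : Fin (m+1) → Fin (m+1)) : Fin m → Fin m :=
  fun j => (finSuccEquiv' u (p (u.succAbove j))).getD j

lemma del_of_eq_up {p : Fin (m+1) → Fin (m+1)} {j l : Fin m}
    (h : p (u.succAbove j) = u.succAbove l) : del u p j = l := by
  simp [del, h, finSuccEquiv'_succAbove]

lemma del_of_eq_u {p : Fin (m+1) → Fin (m+1)} {j : Fin m}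
    (h : p (u.succAbove j) = u) : del u p j = j := by
  simp [del, h, finSuccEquiv'_at]

lemma del_adj {p : Fin (m+1) → Fin (m+1)} (hp : ∀ v, p v = v ∨ G.Adj v (p v)) (j : Fin m) :
    del u p j = j ∨ (Gdel u G).Adj j (del u p j) := by
  rcases up_cases (u := u) (p (u.succAbove j)) with h | ⟨l, hl⟩
  · exact Or.inl (del_of_eq_u h.symm)
  · rw [del_of_eq_up hl]
    rcases hp (u.succAbove j) with h | h
    · exact Or.inl (Fin.succAbove_right_injective (hl.symm.trans h))
    · right
      rw [Gdel_adj, ← hl]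
      exact h

/-- mirror lemma : goodness transfers to the deleted parent map -/
lemma del_good {p : Fin (m+1) → Fin (m+1)}
    (hg : ∀ v, ∃ k, p (p^[k] v) = p^[k] v) (j : Fin m) :
    ∃ k, del u p ((del u p)^[k] j) = (del u p)^[k] j := by
  obtain ⟨k, hk⟩ := hg (u.succAbove j)
  induction k generalizing j with
  | zero =>
    simp only [Function.iterate_zero, id_eq] at hk
    exact ⟨0, by simpa using del_of_eq_up hk⟩
  | succ k ih =>
    rcases up_cases (u := u) (p (u.succAbove j)) with h | ⟨l, hl⟩
    · exact ⟨0, by simpa using del_of_eq_u h.symm⟩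
    · have hk' : p (p^[k] (u.succAbove l)) = p^[k] (u.succAbove l) := by
        rw [← hl, ← Function.iterate_succ_apply]; exact hk
      obtain ⟨k', hk''⟩ := ih (j := l) hk'
      refine ⟨k' + 1, ?_⟩
      rw [Function.iterate_succ_apply, del_of_eq_up hl]
      exact hk''

end del

section ins
variable {m t : ℕ} (u : Fin (m+1)) (w : Fin (m+1)) (q : Fin m → Fin m)
  (C : Fin m → Prop) [DecidablePred C]

/-- insertion of a vertex into a parent map: `u` gets parent `w`, roots satisfying `C`
get attached to `u`. -/
def ins : Fin (m+1) → Fin (m+1) :=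
  fun v => (finSuccEquiv' u v).elim w (fun j => if C j then u else u.succAbove (q j))

@[simp] lemma ins_u : ins u w q C u = w := by
  simp [ins, finSuccEquiv'_at]

@[simp] lemma ins_up (j : Fin m) :
    ins u w q C (u.succAbove j) = if C j then u else u.succAbove (q j) := by
  simp [ins, finSuccEquiv'_succAbove]

variable {u w q C}

lemma ins_iter_of {j : Fin m} (hnc : ∀ k, ¬ C (q^[k] j)) (k : ℕ) :
    (ins u w q C)^[k] (u.succAbove j) = u.succAbove (q^[k] j) := by
  induction k with
  | zero => rfl
  | succ k ih =>
    rw [Function.iterate_succ_apply', ih, ins_up, if_neg (hnc k),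
      Function.iterate_succ_apply']

lemma ins_not_reach {j : Fin m} (hnc : ∀ k, ¬ C (q^[k] j)) (k : ℕ) :
    (ins u w q C)^[k] (u.succAbove j) ≠ u := by
  rw [ins_iter_of hnc]
  exact Fin.succAbove_ne u _

lemma ins_reach {j : Fin m} (hc : ∃ k, C (q^[k] j)) :
    ∃ k, (ins u w q C)^[k] (u.succAbove j) = u := by
  classical
  let k₀ := Nat.find hc
  have hiter : ∀ i, i ≤ k₀ → (ins u w q C)^[i] (u.succAbove j) = u.succAbove (q^[i] j) := by
    intro i hi
    induction i with
    | zero => rfl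
    | succ i ih =>
      rw [Function.iterate_succ_apply', ih (by omega), ins_up,
        if_neg (Nat.find_min hc (by omega : i < k₀)), Function.iterate_succ_apply']
  refine ⟨k₀ + 1, ?_⟩
  rw [Function.iterate_succ_apply', hiter k₀ le_rfl, ins_up, if_pos (Nat.find_spec hc)]

lemma ins_good_of_not {j : Fin m} (hnc : ∀ k, ¬ C (q^[k] j))
    (hgq : ∃ k, q (q^[k] j) = q^[k] j) :
    ∃ k, ins u w q C ((ins u w q C)^[k] (u.succAbove j))
      = (ins u w q C)^[k] (u.succAbove j) := by
  obtain ⟨k, hk⟩ := hgq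
  refine ⟨k, ?_⟩
  rw [ins_iter_of hnc, ins_up, if_neg (hnc k), hk]

lemma ins_good_u (hgw : ∃ k, ins u w q C ((ins u w q C)^[k] w) = (ins u w q C)^[k] w) :
    ∃ k, ins u w q C ((ins u w q C)^[k] u) = (ins u w q C)^[k] u := by
  obtain ⟨k, hk⟩ := hgw
  refine ⟨k + 1, ?_⟩
  rw [Function.iterate_succ_apply, ins_u]
  exact hk

lemma ins_good_of_reach {j : Fin m} (hr : ∃ k, (ins u w q C)^[k] (u.succAbove j) = u)
    (hgu : ∃ k, ins u w q C ((ins u w q C)^[k] u) = (ins u w q C)^[k] u) :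
    ∃ k, ins u w q C ((ins u w q C)^[k] (u.succAbove j))
      = (ins u w q C)^[k] (u.succAbove j) := by
  obtain ⟨k₁, hk₁⟩ := hr
  obtain ⟨k₂, hk₂⟩ := hgu
  refine ⟨k₂ + k₁, ?_⟩
  rw [Function.iterate_add_apply, hk₁]
  exact hk₂

end ins

section ciso
variable {m t : ℕ} {u : Fin (m+1)} {G : SimpleGraph (Fin (m+1))}

/-- The isolated-vertex recursion for rooted colored forests. -/
noncomputable def isoEquiv (hu : ∀ v, ¬ G.Adj u v) :
    CfgSet G t ≃ CfgSet (Gdel u G) t × Fin t where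
  toFun pg := by
    obtain ⟨⟨p, γ⟩, hadj, hgood, hcol⟩ := pg
    dsimp only at hadj hgood hcol
    have hne : ∀ j, p (u.succAbove j) ≠ u := by
      intro j hh
      rcases hadj (u.succAbove j) with h | h
      · rw [hh] at h; exact Fin.succAbove_ne u j h.symm
      · rw [hh] at h; exact hu _ h.symm
    refine ⟨⟨⟨del u p, fun j => γ (u.succAbove j)⟩, ?_, ?_, ?_⟩, γ u⟩
    · exact del_adj G hadj
    · exact del_good hgood
    · intro j
      dsimp only
      obtain ⟨l, hl⟩ := Fin.exists_succAbove_eq (hne j)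
      rw [del_of_eq_up hl.symm, hl]
      exact hcol _
  invFun x := by
    obtain ⟨⟨⟨q, δ⟩, hadj, hgood, hcol⟩, c⟩ := x
    dsimp only at hadj hgood hcol
    refine ⟨⟨ins u u q (fun _ => False), fun v => (finSuccEquiv' u v).elim c δ⟩, ?_, ?_, ?_⟩
    · intro v
      dsimp only
      rcases up_cases (u := u) v with rfl | ⟨j, rfl⟩
      · left; simp
      · rw [ins_up, if_neg not_false]
        rcases hadj j with h | h
        · left; rw [h]
        · right; exact h
    · intro v
      dsimp only
      rcases up_cases (u := u) v with rfl | ⟨j, rfl⟩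
      · exact ins_good_u ⟨0, by simp⟩
      · exact ins_good_of_not (fun _ => not_false) (hgood j)
    · intro v
      dsimp only
      rcases up_cases (u := u) v with rfl | ⟨j, rfl⟩
      · simp [finSuccEquiv'_at]
      · rw [ins_up, if_neg not_false]
        simp only [finSuccEquiv'_succAbove, Option.elim_some]
        exact hcol j
  left_inv := by
    rintro ⟨⟨p, γ⟩, hadj, hgood, hcol⟩
    dsimp only at hadj hgood hcol
    have hpu : p u = u := by
      rcases hadj u with h | h
      · exact h
      · exact absurd h (hu _)
    have hne : ∀ j, p (u.succAbove j) ≠ u := by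
      intro j hh
      rcases hadj (u.succAbove j) with h | h
      · rw [hh] at h; exact Fin.succAbove_ne u j h.symm
      · rw [hh] at h; exact hu _ h.symm
    apply Subtype.ext
    refine Prod.ext ?_ ?_ <;> funext v
    · show ins u u (del u p) _ v = p v
      rcases up_cases (u := u) v with rfl | ⟨j, rfl⟩
      · simp [hpu]
      · rw [ins_up, if_neg not_false]
        obtain ⟨l, hl⟩ := Fin.exists_succAbove_eq (hne j)
        rw [del_of_eq_up hl.symm, hl]
    · show Option.elim _ (γ u) _ = γ v
      rcases up_cases (u := u) v with rfl | ⟨j, rfl⟩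
      · simp [finSuccEquiv'_at]
      · simp [finSuccEquiv'_succAbove]
  right_inv := by
    rintro ⟨⟨⟨q, δ⟩, hadj, hgood, hcol⟩, c⟩
    refine Prod.ext (Subtype.ext (Prod.ext ?_ ?_)) ?_
    · funext j
      show del u (ins u u q _) j = q j
      exact del_of_eq_up (by rw [ins_up, if_neg not_false])
    · funext j
      show (fun v => (finSuccEquiv' u v).elim c δ) (u.succAbove j) = δ j
      simp [finSuccEquiv'_succAbove]
    · show (fun v => (finSuccEquiv' u v).elim c δ) u = c
      simp [finSuccEquiv'_at]

lemma card_ciso (hu : ∀ v, ¬ G.Adj u v) :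
    Nat.card (CfgSet G t) = Nat.card (CfgSet (Gdel u G) t) * t := by
  rw [Nat.card_congr (isoEquiv hu), Nat.card_prod, Nat.card_eq_fintype_card (α := Fin t),
    Fintype.card_fin]

end ciso

section cdom
variable {m t : ℕ} (u : Fin (m+1))

/-- `v` lies below `u` in the forest of `p` -/
def Below (p : Fin (m+1) → Fin (m+1)) (v : Fin (m+1)) : Prop := ∃ k, p^[k] v = u

open Classical in
/-- new coloring after deleting a dominating vertex: everything below `u` gets the
new color `Fin.last t` -/
noncomputable def fwdγ (p : Fin (m+1) → Fin (m+1)) (γ : Fin (m+1) → Fin t) :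
    Fin m → Fin (t+1) :=
  fun j => if Below u p (u.succAbove j) then Fin.last t else (γ (u.succAbove j)).castSucc

/-- collapse a `Fin (t+1)`-color to a `Fin t`-color, sending the special color to `cu` -/
def lower (cu : Fin t) (x : Fin (t+1)) : Fin t :=
  if h : x = Fin.last t then cu else x.castPred h

@[simp] lemma lower_last (cu : Fin t) : lower cu (Fin.last t) = cu := by simp [lower]

@[simp] lemma lower_castSucc (cu : Fin t) (y : Fin t) : lower cu y.castSucc = y := by
  simp [lower, (Fin.castSucc_lt_last y).ne]

/-- condition for attaching a root to the inserted dominating vertex -/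
def Ccond (q : Fin m → Fin m) (δ : Fin m → Fin (t+1)) : Fin m → Prop :=
  fun j => δ j = Fin.last t ∧ q j = j

instance (q : Fin m → Fin m) (δ : Fin m → Fin (t+1)) : DecidablePred (Ccond q δ) :=
  fun j => instDecidableAnd

/-- new coloring after inserting a dominating vertex -/
def invγ (cu : Fin t) (δ : Fin m → Fin (t+1)) : Fin (m+1) → Fin t :=
  fun v => (finSuccEquiv' u v).elim cu (fun j => lower cu (δ j))

@[simp] lemma invγ_u (cu : Fin t) (δ : Fin m → Fin (t+1)) : invγ u cu δ u = cu := by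
  simp [invγ, finSuccEquiv'_at]

@[simp] lemma invγ_up (cu : Fin t) (δ : Fin m → Fin (t+1)) (j : Fin m) :
    invγ u cu δ (u.succAbove j) = lower cu (δ j) := by
  simp [invγ, finSuccEquiv'_succAbove]

variable {u}

lemma isSome_of_ne {v : Fin (m+1)} (h : v ≠ u) : (finSuccEquiv' u v).isSome := by
  rcases up_cases (u := u) v with rfl | ⟨j, rfl⟩
  · exact absurd rfl h
  · rw [finSuccEquiv'_succAbove]; rfl

lemma up_get {v : Fin (m+1)} (h : (finSuccEquiv' u v).isSome) :
    u.succAbove ((finSuccEquiv' u v).get h) = v := by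
  rw [← finSuccEquiv'_symm_some, Option.some_get, Equiv.symm_apply_apply]

section qfacts
variable {q : Fin m → Fin m} {δ : Fin m → Fin (t+1)}

lemma hnc (hcolδ : ∀ j, δ (q j) = δ j) {j : Fin m} (hδ : δ j ≠ Fin.last t) :
    ∀ k, ¬ Ccond q δ (q^[k] j) := by
  intro k hC
  exact hδ (by rw [← color_const hcolδ k j]; exact hC.1)

lemma hcc (hcolδ : ∀ j, δ (q j) = δ j) (hgoodq : ∀ j, ∃ k, q (q^[k] j) = q^[k] j)
    {j : Fin m} (hδ : δ j = Fin.last t) : ∃ k, Ccond q δ (q^[k] j) := by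
  obtain ⟨k, hk⟩ := hgoodq j
  exact ⟨k, by rw [color_const hcolδ k j]; exact hδ, hk⟩

end qfacts

/-- below-ness transfers along one step of `p` -/
lemma below_step {p : Fin (m+1) → Fin (m+1)} {j l : Fin m}
    (h : p (u.succAbove j) = u.succAbove l) :
    Below u p (u.succAbove j) ↔ Below u p (u.succAbove l) := by
  constructor
  · rintro ⟨k, hk⟩
    rcases k with _ | k
    · exact absurd hk (Fin.succAbove_ne u j)
    · exact ⟨k, by rw [← h, ← Function.iterate_succ_apply]; exact hk⟩
  · rintro ⟨k, hk⟩
    exact ⟨k + 1, by rw [Function.iterate_succ_apply, h]; exact hk⟩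

lemma below_of_eq_u {p : Fin (m+1) → Fin (m+1)} {j : Fin m}
    (h : p (u.succAbove j) = u) : Below u p (u.succAbove j) :=
  ⟨1, h⟩

lemma not_below_of_fixed {p : Fin (m+1) → Fin (m+1)} {j : Fin m}
    (h : p (u.succAbove j) = u.succAbove j) : ¬ Below u p (u.succAbove j) := by
  rintro ⟨k, hk⟩
  rw [reaches_fixed h] at hk
  exact Fin.succAbove_ne u j hk

section recon
variable {G : SimpleGraph (Fin (m+1))} {p : Fin (m+1) → Fin (m+1)} {γ : Fin (m+1) → Fin t}

lemma fwdγ_eq_last {j : Fin m} (h : Below u p (u.succAbove j)) :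
    fwdγ u p γ j = Fin.last t := by
  unfold fwdγ
  rw [if_pos h]

lemma fwdγ_eq_castSucc {j : Fin m} (h : ¬ Below u p (u.succAbove j)) :
    fwdγ u p γ j = (γ (u.succAbove j)).castSucc := by
  unfold fwdγ
  rw [if_neg h]

lemma fwdγ_ne_last_iff {j : Fin m} :
    fwdγ u p γ j = Fin.last t ↔ Below u p (u.succAbove j) := by
  constructor
  · intro h
    by_contra hb
    rw [fwdγ_eq_castSucc hb] at h
    exact (Fin.castSucc_lt_last _).ne h
  · exact fwdγ_eq_last

/-- the fwd coloring is a valid coloring for the deleted parent map -/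
lemma fwdγ_col (hcol : ∀ v, γ (p v) = γ v) (j : Fin m) :
    fwdγ u p γ (del u p j) = fwdγ u p γ j := by
  rcases up_cases (u := u) (p (u.succAbove j)) with h | ⟨l, hl⟩
  · rw [del_of_eq_u h.symm]
  · rw [del_of_eq_up hl]
    by_cases hb : Below u p (u.succAbove j)
    · rw [fwdγ_eq_last ((below_step hl).mp hb), fwdγ_eq_last hb]
    · have hb' := hb
      rw [below_step hl] at hb'
      rw [fwdγ_eq_castSucc hb', fwdγ_eq_castSucc hb, ← hl, hcol]

/-- reconstruction of the parent map -/
lemma recon_p (w : Fin (m+1)) (j : Fin m) :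
    ins u w (del u p) (Ccond (del u p) (fwdγ u p γ)) (u.succAbove j)
      = p (u.succAbove j) := by
  rw [ins_up]
  rcases up_cases (u := u) (p (u.succAbove j)) with h | ⟨l, hl⟩
  · rw [if_pos ⟨fwdγ_eq_last (below_of_eq_u h.symm), del_of_eq_u h.symm⟩, ← h]
  · rw [if_neg, del_of_eq_up hl, hl]
    rintro ⟨h1, h2⟩
    rw [del_of_eq_up hl] at h2
    subst h2
    rw [fwdγ_ne_last_iff] at h1
    exact not_below_of_fixed hl h1

/-- reconstruction of the coloring -/
lemma recon_γ (hcol : ∀ v, γ (p v) = γ v) (j : Fin m) :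
    lower (γ u) (fwdγ u p γ j) = γ (u.succAbove j) := by
  by_cases hb : Below u p (u.succAbove j)
  · rw [fwdγ_eq_last hb, lower_last]
    obtain ⟨k, hk⟩ := hb
    have h2 : γ (p^[k] (u.succAbove j)) = γ (u.succAbove j) := color_const hcol k _
    rw [hk] at h2
    exact h2
  · rw [fwdγ_eq_castSucc hb, lower_castSucc]

variable {q : Fin m → Fin m} {δ : Fin m → Fin (t+1)} {w : Fin (m+1)} {cu : Fin t}

lemma inv_adj_up (hu : ∀ v, v ≠ u → G.Adj u v)
    (hadjq : ∀ j, q j = j ∨ (Gdel u G).Adj j (q j)) (j : Fin m) :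
    ins u w q (Ccond q δ) (u.succAbove j) = u.succAbove j ∨
      G.Adj (u.succAbove j) (ins u w q (Ccond q δ) (u.succAbove j)) := by
  rw [ins_up]
  by_cases hC : Ccond q δ j
  · rw [if_pos hC]
    exact Or.inr (hu _ (Fin.succAbove_ne u j)).symm
  · rw [if_neg hC]
    rcases hadjq j with h | h
    · exact Or.inl (by rw [h])
    · exact Or.inr h

lemma inv_below_iff (hcolδ : ∀ j, δ (q j) = δ j)
    (hgoodq : ∀ j, ∃ k, q (q^[k] j) = q^[k] j) (j : Fin m) :
    Below u (ins u w q (Ccond q δ)) (u.succAbove j) ↔ δ j = Fin.last t := by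
  constructor
  · intro hb
    by_contra hδ
    obtain ⟨k, hk⟩ := hb
    exact ins_not_reach (hnc hcolδ hδ) k hk
  · intro hδ
    exact ins_reach (hcc hcolδ hgoodq hδ)

lemma inv_col_up (hcolδ : ∀ j, δ (q j) = δ j) (j : Fin m) :
    invγ u cu δ (ins u w q (Ccond q δ) (u.succAbove j)) = invγ u cu δ (u.succAbove j) := by
  rw [ins_up]
  by_cases hC : Ccond q δ j
  · rw [if_pos hC, invγ_u, invγ_up, hC.1, lower_last]
  · rw [if_neg hC, invγ_up, invγ_up, hcolδ]

lemma recon_q (j : Fin m) : del u (ins u w q (Ccond q δ)) j = q j := by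
  by_cases hC : Ccond q δ j
  · rw [del_of_eq_u (by rw [ins_up, if_pos hC]), hC.2]
  · exact del_of_eq_up (by rw [ins_up, if_neg hC])

lemma recon_δ (hcolδ : ∀ j, δ (q j) = δ j)
    (hgoodq : ∀ j, ∃ k, q (q^[k] j) = q^[k] j) (j : Fin m) :
    fwdγ u (ins u w q (Ccond q δ)) (invγ u cu δ) j = δ j := by
  by_cases hδ : δ j = Fin.last t
  · rw [fwdγ_eq_last ((inv_below_iff hcolδ hgoodq j).mpr hδ), hδ]
  · rw [fwdγ_eq_castSucc (fun hb => hδ ((inv_below_iff hcolδ hgoodq j).mp hb)), invγ_up,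
      lower, dif_neg hδ, Fin.castSucc_castPred]

end recon
end cdom

section domeq
variable {m t : ℕ} {u : Fin (m+1)} {G : SimpleGraph (Fin (m+1))}

/-- case A₀ : the deleted vertex is a root -/
noncomputable def domEquiv₀ (hu : ∀ v, v ≠ u → G.Adj u v) :
    {a : ↥(CfgSet G t) // a.1.1 u = u} ≃ ↥(CfgSet (Gdel u G) (t+1)) × Fin t where
  toFun a := by
    obtain ⟨⟨⟨p, γ⟩, hadj, hgood, hcol⟩, hp0⟩ := a
    dsimp only at hadj hgood hcol hp0
    exact ⟨⟨⟨del u p, fwdγ u p γ⟩, del_adj G hadj, del_good hgood, fwdγ_col hcol⟩, γ u⟩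
  invFun x := by
    obtain ⟨⟨⟨q, δ⟩, hadjq, hgoodq, hcolδ⟩, c⟩ := x
    dsimp only at hadjq hgoodq hcolδ
    refine ⟨⟨⟨ins u u q (Ccond q δ), invγ u c δ⟩, ?_, ?_, ?_⟩, ins_u u u q (Ccond q δ)⟩
    · intro v
      dsimp only
      rcases up_cases (u := u) v with rfl | ⟨j, rfl⟩
      · left; rw [ins_u]
      · exact inv_adj_up hu hadjq j
    · intro v
      dsimp only
      rcases up_cases (u := u) v with rfl | ⟨j, rfl⟩
      · exact ⟨0, by simp⟩
      · by_cases hδ : δ j = Fin.last t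
        · exact ins_good_of_reach (ins_reach (hcc hcolδ hgoodq hδ)) ⟨0, by simp⟩
        · exact ins_good_of_not (hnc hcolδ hδ) (hgoodq j)
    · intro v
      dsimp only
      rcases up_cases (u := u) v with rfl | ⟨j, rfl⟩
      · rw [ins_u]
      · exact inv_col_up hcolδ j
  left_inv := by
    rintro ⟨⟨⟨p, γ⟩, hadj, hgood, hcol⟩, hp0⟩
    dsimp only at hadj hgood hcol hp0
    apply Subtype.ext
    apply Subtype.ext
    refine Prod.ext ?_ ?_ <;> funext v <;>
      rcases up_cases (u := u) v with rfl | ⟨j, rfl⟩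
    · show ins u u (del u p) _ u = p u
      rw [ins_u, hp0]
    · exact recon_p u j
    · show invγ u (γ u) _ u = γ u
      rw [invγ_u]
    · show invγ u (γ u) _ (u.succAbove j) = γ (u.succAbove j)
      rw [invγ_up]
      exact recon_γ hcol j
  right_inv := by
    rintro ⟨⟨⟨q, δ⟩, hadjq, hgoodq, hcolδ⟩, c⟩
    dsimp only at hadjq hgoodq hcolδ
    refine Prod.ext (Subtype.ext (Prod.ext ?_ ?_)) ?_
    · funext j
      exact recon_q j
    · funext j
      exact recon_δ hcolδ hgoodq j
    · show invγ u c δ u = c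
      rw [invγ_u]

/-- case A₁ : the deleted vertex is not a root -/
noncomputable def domEquiv₁ (hu : ∀ v, v ≠ u → G.Adj u v) :
    {a : ↥(CfgSet G t) // ¬ a.1.1 u = u} ≃
      {y : ↥(CfgSet (Gdel u G) (t+1)) × Fin m // y.1.1.2 y.2 ≠ Fin.last t} where
  toFun a := by
    obtain ⟨⟨⟨p, γ⟩, hadj, hgood, hcol⟩, hpu⟩ := a
    dsimp only at hadj hgood hcol hpu
    have zs : (finSuccEquiv' u (p u)).isSome := isSome_of_ne hpu
    have hz : u.succAbove ((finSuccEquiv' u (p u)).get zs) = p u := up_get zs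
    have hnb : ¬ Below u p (u.succAbove ((finSuccEquiv' u (p u)).get zs)) := by
      rw [hz]
      rintro ⟨k, hk⟩
      have : p^[k+1] u = u := by rw [Function.iterate_succ_apply]; exact hk
      exact hpu (fixed_of_cycle (hgood u) this (by omega))
    refine ⟨⟨⟨⟨del u p, fwdγ u p γ⟩, del_adj G hadj, del_good hgood, fwdγ_col hcol⟩,
      (finSuccEquiv' u (p u)).get zs⟩, ?_⟩
    dsimp only
    rw [fwdγ_eq_castSucc hnb]
    exact (Fin.castSucc_lt_last _).ne
  invFun y := by
    obtain ⟨⟨⟨⟨q, δ⟩, hadjq, hgoodq, hcolδ⟩, z⟩, hz⟩ := y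
    dsimp only at hadjq hgoodq hcolδ hz
    have hgu : ∃ k, ins u (u.succAbove z) q (Ccond q δ)
        ((ins u (u.succAbove z) q (Ccond q δ))^[k] u)
        = (ins u (u.succAbove z) q (Ccond q δ))^[k] u :=
      ins_good_u (ins_good_of_not (hnc hcolδ hz) (hgoodq z))
    refine ⟨⟨⟨ins u (u.succAbove z) q (Ccond q δ), invγ u ((δ z).castPred hz) δ⟩,
      ?_, ?_, ?_⟩, ?_⟩
    · intro v
      dsimp only
      rcases up_cases (u := u) v with rfl | ⟨j, rfl⟩
      · right
        rw [ins_u]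
        exact hu _ (Fin.succAbove_ne u z)
      · exact inv_adj_up hu hadjq j
    · intro v
      dsimp only
      rcases up_cases (u := u) v with rfl | ⟨j, rfl⟩
      · exact hgu
      · by_cases hδ : δ j = Fin.last t
        · exact ins_good_of_reach (ins_reach (hcc hcolδ hgoodq hδ)) hgu
        · exact ins_good_of_not (hnc hcolδ hδ) (hgoodq j)
    · intro v
      dsimp only
      rcases up_cases (u := u) v with rfl | ⟨j, rfl⟩
      · rw [ins_u, invγ_up, invγ_u, lower, dif_neg hz]
      · exact inv_col_up hcolδ j
    · show ¬ ins u (u.succAbove z) q (Ccond q δ) u = u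
      rw [ins_u]
      exact Fin.succAbove_ne u z
  left_inv := by
    rintro ⟨⟨⟨p, γ⟩, hadj, hgood, hcol⟩, hpu⟩
    dsimp only at hadj hgood hcol hpu
    have zs : (finSuccEquiv' u (p u)).isSome := isSome_of_ne hpu
    have hz : u.succAbove ((finSuccEquiv' u (p u)).get zs) = p u := up_get zs
    have hnb : ¬ Below u p (u.succAbove ((finSuccEquiv' u (p u)).get zs)) := by
      rw [hz]
      rintro ⟨k, hk⟩
      have h2 : p^[k+1] u = u := by rw [Function.iterate_succ_apply]; exact hk
      exact hpu (fixed_of_cycle (hgood u) h2 (by omega))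
    have hcu : (fwdγ u p γ ((finSuccEquiv' u (p u)).get zs)).castPred
        (by rw [fwdγ_eq_castSucc hnb]; exact (Fin.castSucc_lt_last _).ne) = γ u := by
      have h3 : γ (p u) = γ u := hcol u
      have h4 : (fwdγ u p γ ((finSuccEquiv' u (p u)).get zs))
          = (γ (u.succAbove ((finSuccEquiv' u (p u)).get zs))).castSucc :=
        fwdγ_eq_castSucc hnb
      rw [(Fin.castPred_eq_iff_eq_castSucc _ _ _).mpr h4, hz, h3]
    apply Subtype.ext
    apply Subtype.ext
    refine Prod.ext ?_ ?_ <;> funext v <;>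
      rcases up_cases (u := u) v with rfl | ⟨j, rfl⟩
    · show ins u (u.succAbove _) (del u p) _ u = p u
      rw [ins_u, hz]
    · exact recon_p _ j
    · show invγ u _ _ u = γ u
      rw [invγ_u, hcu]
    · show invγ u _ _ (u.succAbove j) = γ (u.succAbove j)
      rw [invγ_up, hcu]
      exact recon_γ hcol j
  right_inv := by
    rintro ⟨⟨⟨⟨q, δ⟩, hadjq, hgoodq, hcolδ⟩, z⟩, hz⟩
    dsimp only at hadjq hgoodq hcolδ hz
    apply Subtype.ext
    refine Prod.ext (Subtype.ext (Prod.ext ?_ ?_)) ?_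
    · funext j
      exact recon_q j
    · funext j
      exact recon_δ hcolδ hgoodq j
    · show (finSuccEquiv' u (ins u (u.succAbove z) q (Ccond q δ) u)).get _ = z
      apply Fin.succAbove_right_injective (p := u)
      rw [up_get, ins_u]

/-- the color swapping equivalence -/
noncomputable def swapEquiv :
    {y : ↥(CfgSet (Gdel u G) (t+1)) × Fin m // y.1.1.2 y.2 = Fin.last t} × Fin (t+1) ≃
      ↥(CfgSet (Gdel u G) (t+1)) × Fin m where
  toFun x := by
    obtain ⟨⟨⟨⟨⟨q, δ⟩, hadjq, hgoodq, hcolδ⟩, z⟩, hz⟩, c⟩ := x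
    dsimp only at hadjq hgoodq hcolδ hz
    exact ⟨⟨⟨q, Equiv.swap (Fin.last t) c ∘ δ⟩, hadjq, hgoodq,
      fun j => congrArg (Equiv.swap (Fin.last t) c) (hcolδ j)⟩, z⟩
  invFun y := by
    obtain ⟨⟨⟨q, δ⟩, hadjq, hgoodq, hcolδ⟩, z⟩ := y
    dsimp only at hadjq hgoodq hcolδ
    refine ⟨⟨⟨⟨⟨q, Equiv.swap (Fin.last t) (δ z) ∘ δ⟩, hadjq, hgoodq,
      fun j => congrArg (Equiv.swap (Fin.last t) (δ z)) (hcolδ j)⟩, z⟩, ?_⟩, δ z⟩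
    show Equiv.swap (Fin.last t) (δ z) (δ z) = Fin.last t
    rw [Equiv.swap_apply_right]
  left_inv := by
    rintro ⟨⟨⟨⟨⟨q, δ⟩, hadjq, hgoodq, hcolδ⟩, z⟩, hz⟩, c⟩
    dsimp only at hadjq hgoodq hcolδ hz
    have h1 : Equiv.swap (Fin.last t) c (δ z) = c := by rw [hz, Equiv.swap_apply_left]
    refine Prod.ext (Subtype.ext (Prod.ext (Subtype.ext (Prod.ext rfl ?_)) rfl)) ?_
    · show Equiv.swap (Fin.last t) (Equiv.swap (Fin.last t) c (δ z)) ∘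
        (Equiv.swap (Fin.last t) c ∘ δ) = δ
      funext j
      rw [h1]
      exact Equiv.swap_apply_self _ _ (δ j)
    · show Equiv.swap (Fin.last t) c (δ z) = c
      exact h1
  right_inv := by
    rintro ⟨⟨⟨q, δ⟩, hadjq, hgoodq, hcolδ⟩, z⟩
    dsimp only at hadjq hgoodq hcolδ
    refine Prod.ext (Subtype.ext (Prod.ext rfl ?_)) rfl
    show Equiv.swap (Fin.last t) (δ z) ∘ (Equiv.swap (Fin.last t) (δ z) ∘ δ) = δ
    funext j
    exact Equiv.swap_apply_self _ _ (δ j)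

/-- The dominating-vertex recursion for rooted colored forests. -/
lemma card_cdom (hu : ∀ v, v ≠ u → G.Adj u v) :
    Nat.card (CfgSet G t) * (t + 1) =
      t * (t + (m + 1)) * Nat.card (CfgSet (Gdel u G) (t+1)) := by
  classical
  set a := Nat.card (CfgSet (Gdel u G) (t+1)) with ha
  set x := Nat.card {y : ↥(CfgSet (Gdel u G) (t+1)) × Fin m // y.1.1.2 y.2 ≠ Fin.last t}
  set y := Nat.card {y : ↥(CfgSet (Gdel u G) (t+1)) × Fin m // y.1.1.2 y.2 = Fin.last t}
  have hsplit : Nat.card (CfgSet G t) = a * t + x := by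
    have e := (Equiv.sumCompl (fun b : ↥(CfgSet G t) => b.1.1 u = u)).symm
    rw [Nat.card_congr e, Nat.card_sum, Nat.card_congr (domEquiv₀ hu),
      Nat.card_congr (domEquiv₁ hu), Nat.card_prod,
      Nat.card_eq_fintype_card (α := Fin t), Fintype.card_fin]
  have hxy : y + x = a * m := by
    have e := (Equiv.sumCompl
      (fun b : ↥(CfgSet (Gdel u G) (t+1)) × Fin m => b.1.1.2 b.2 = Fin.last t)).symm
    have := Nat.card_congr e
    rw [Nat.card_sum, Nat.card_prod, Nat.card_eq_fintype_card (α := Fin m),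
      Fintype.card_fin] at this
    exact this.symm
  have hy : y * (t + 1) = a * m := by
    have := Nat.card_congr (swapEquiv (u := u) (G := G) (t := t))
    rw [Nat.card_prod, Nat.card_prod, Nat.card_eq_fintype_card (α := Fin (t+1)),
      Nat.card_eq_fintype_card (α := Fin m), Fintype.card_fin, Fintype.card_fin] at this
    exact this
  have hx : x * (t + 1) = a * m * t := by
    have h1 : x * (t+1) + y * (t+1) = a * m * (t+1) := by
      rw [← add_mul, Nat.add_comm x y, hxy]
    rw [hy] at h1
    have h2 : a * m * (t + 1) = a * m * t + a * m := by ring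
    omega
  rw [hsplit]
  have : (a * t + x) * (t+1) = a * t * (t+1) + x * (t+1) := by ring
  rw [this, hx]
  ring

end domeq

section treecfg
variable {m : ℕ} {u : Fin (m+1)} {G : SimpleGraph (Fin (m+1))}

/-- spanning trees of a graph with dominating vertex `u` correspond to rooted spanning
forests of the deletion -/
noncomputable def treeEquiv (hu : ∀ v, v ≠ u → G.Adj u v) :
    TreeSet G u ≃ CfgSet (Gdel u G) 1 where
  toFun p := by
    obtain ⟨p, hadj, hpu, hreach⟩ := p
    have hgood : ∀ v, ∃ k, p (p^[k] v) = p^[k] v := by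
      intro v
      obtain ⟨k, hk⟩ := hreach v
      exact ⟨k, by rw [hk, hpu]⟩
    exact ⟨⟨del u p, fun _ => 0⟩, del_adj G hadj, del_good hgood,
      fun _ => Subsingleton.elim _ _⟩
  invFun x := by
    obtain ⟨⟨q, δ⟩, hadjq, hgoodq, _⟩ := x
    dsimp only at hadjq hgoodq
    refine ⟨ins u u q (fun j => q j = j), ?_, ins_u u u q _, ?_⟩
    · intro v
      rcases up_cases (u := u) v with rfl | ⟨j, rfl⟩
      · left; rw [ins_u]
      · rw [ins_up]
        by_cases hC : q j = j
        · rw [if_pos hC]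
          exact Or.inr (hu _ (Fin.succAbove_ne u j)).symm
        · rw [if_neg hC]
          rcases hadjq j with h | h
          · exact absurd h hC
          · exact Or.inr h
    · intro v
      rcases up_cases (u := u) v with rfl | ⟨j, rfl⟩
      · exact ⟨0, by simp⟩
      · exact ins_reach (hgoodq j)
  left_inv := by
    rintro ⟨p, hadj, hpu, hreach⟩
    apply Subtype.ext
    show ins u u (del u p) _ = p
    funext v
    rcases up_cases (u := u) v with rfl | ⟨j, rfl⟩
    · rw [ins_u, hpu]
    · rw [ins_up]
      rcases up_cases (u := u) (p (u.succAbove j)) with h | ⟨l, hl⟩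
      · rw [if_pos (del_of_eq_u h.symm), ← h]
      · rw [del_of_eq_up hl]
        have hne : l ≠ j := by
          rintro rfl
          obtain ⟨k, hk⟩ := hreach (u.succAbove l)
          rw [reaches_fixed hl] at hk
          exact Fin.succAbove_ne u l hk
        rw [if_neg hne, hl]
  right_inv := by
    rintro ⟨⟨q, δ⟩, hadjq, hgoodq, hcolδ⟩
    dsimp only at hadjq hgoodq
    apply Subtype.ext
    refine Prod.ext ?_ (Subsingleton.elim _ _)
    funext j
    show del u (ins u u q _) j = q j
    by_cases hC : q j = j
    · rw [del_of_eq_u (by rw [ins_up, if_pos hC]), hC]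
    · exact del_of_eq_up (by rw [ins_up, if_neg hC])

end treecfg

section degrees
variable {m : ℕ} {u : Fin (m+1)} {G : SimpleGraph (Fin (m+1))} [DecidableRel G.Adj]
open Finset

lemma deg_u_dom (hu : ∀ v, v ≠ u → G.Adj u v) : G.degree u = m := by
  have : G.neighborFinset u = univ.erase u := by
    ext w
    simp only [mem_neighborFinset, mem_erase, mem_univ, and_true]
    exact ⟨fun h => h.ne', fun h => hu w h⟩
  simp only [SimpleGraph.degree]
  rw [this, card_erase_of_mem (mem_univ u), card_univ, Fintype.card_fin]
  omega

lemma deg_up_dom (hu : ∀ v, v ≠ u → G.Adj u v) (j : Fin m) :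
    G.degree (u.succAbove j) = (Gdel u G).degree j + 1 := by
  have : G.neighborFinset (u.succAbove j)
      = insert u (((Gdel u G).neighborFinset j).image (u.succAbove ·)) := by
    ext w
    simp only [mem_neighborFinset, mem_insert, mem_image]
    constructor
    · intro h
      rcases up_cases (u := u) w with rfl | ⟨l, rfl⟩
      · exact Or.inl rfl
      · exact Or.inr ⟨l, h, rfl⟩
    · rintro (rfl | ⟨l, hl, rfl⟩)
      · exact (hu _ (Fin.succAbove_ne _ j)).symm
      · exact hl
  simp only [SimpleGraph.degree]
  rw [this, card_insert_of_notMem, card_image_of_injective _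
    Fin.succAbove_right_injective]
  intro hmem
  simp only [mem_image] at hmem
  obtain ⟨l, -, hl⟩ := hmem
  exact Fin.succAbove_ne u l hl

lemma deg_up_iso (hu : ∀ v, ¬ G.Adj u v) (j : Fin m) :
    G.degree (u.succAbove j) = (Gdel u G).degree j := by
  have : G.neighborFinset (u.succAbove j)
      = ((Gdel u G).neighborFinset j).image (u.succAbove ·) := by
    ext w
    simp only [mem_neighborFinset, mem_image]
    constructor
    · intro h
      rcases up_cases (u := u) w with rfl | ⟨l, rfl⟩
      · exact absurd h.symm (hu _)
      · exact ⟨l, h, rfl⟩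
    · rintro ⟨l, hl, rfl⟩
      exact hl
  simp only [SimpleGraph.degree]
  rw [this, card_image_of_injective _ Fin.succAbove_right_injective]

lemma dstar_dom (hu : ∀ v, v ≠ u → G.Adj u v) {i : ℕ} (h1 : 1 ≤ i) (h2 : i ≤ m) :
    (univ.filter fun v => i ≤ G.degree v).card
      = (univ.filter fun j => i - 1 ≤ (Gdel u G).degree j).card + 1 := by
  have : (univ.filter fun v => i ≤ G.degree v)
      = insert u ((univ.filter fun j => i - 1 ≤ (Gdel u G).degree j).image (u.succAbove ·)) := by
    ext w
    simp only [mem_filter, mem_univ, true_and, mem_insert, mem_image]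
    constructor
    · intro h
      rcases up_cases (u := u) w with rfl | ⟨l, rfl⟩
      · exact Or.inl rfl
      · refine Or.inr ⟨l, ?_, rfl⟩
        rw [deg_up_dom hu] at h
        omega
    · rintro (rfl | ⟨l, hl, rfl⟩)
      · rw [deg_u_dom hu]; omega
      · rw [deg_up_dom hu]; omega
  rw [this, card_insert_of_notMem, card_image_of_injective _ Fin.succAbove_right_injective]
  intro hmem
  simp only [mem_image] at hmem
  obtain ⟨l, -, hl⟩ := hmem
  exact Fin.succAbove_ne u l hl

lemma dstar_iso (hu : ∀ v, ¬ G.Adj u v) {i : ℕ} (h1 : 1 ≤ i) :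
    (univ.filter fun v => i ≤ G.degree v).card
      = (univ.filter fun j => i ≤ (Gdel u G).degree j).card := by
  have : (univ.filter fun v => i ≤ G.degree v)
      = (univ.filter fun j => i ≤ (Gdel u G).degree j).image (u.succAbove ·) := by
    ext w
    simp only [mem_filter, mem_univ, true_and, mem_image]
    constructor
    · intro h
      rcases up_cases (u := u) w with rfl | ⟨l, rfl⟩
      · have : G.degree u = 0 := by
          rw [SimpleGraph.degree, card_eq_zero]
          ext x
          simp [mem_neighborFinset, hu]
        omega
      · rw [deg_up_iso hu] at h
        exact ⟨l, h, rfl⟩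
    · rintro ⟨l, hl, rfl⟩
      rw [deg_up_iso hu]
      exact hl
  rw [this, card_image_of_injective _ Fin.succAbove_right_injective]

lemma dstar_iso_top (hu : ∀ v, ¬ G.Adj u v) (hm : 1 ≤ m) :
    (univ.filter fun v => m ≤ G.degree v).card = 0 := by
  rw [card_eq_zero, eq_empty_iff_forall_notMem]
  intro v hv
  rw [mem_filter] at hv
  have hdeg := hv.2
  have hvu : v ≠ u := by
    rintro rfl
    have : G.degree v = 0 := by
      rw [SimpleGraph.degree, card_eq_zero]
      ext x
      simp [mem_neighborFinset, hu]
    omega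
  -- v has degree ≥ m on Fin (m+1) hence is adjacent to all others, in particular u
  have hsub : G.neighborFinset v ⊆ univ.erase v := by
    intro x hx
    rw [mem_neighborFinset] at hx
    exact mem_erase.mpr ⟨hx.ne', mem_univ x⟩
  have hcard : (univ.erase v).card = m := by
    rw [card_erase_of_mem (mem_univ v), card_univ, Fintype.card_fin]
    omega
  have : G.neighborFinset v = univ.erase v :=
    eq_of_subset_of_card_le hsub (by rw [hcard]; exact hdeg)
  have hadj : G.Adj v u := by
    rw [← mem_neighborFinset, this]
    exact mem_erase.mpr ⟨(Ne.symm hvu), mem_univ u⟩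
  exact hu v hadj.symm

end degrees

section dichotomy
variable {V : Type*} [Fintype V] [Nonempty V] {G : SimpleGraph V}

lemma threshold_dichotomy (h : IsThreshold G) :
    (∃ u, ∀ v, v ≠ u → G.Adj u v) ∨ (∃ u, ∀ v, ¬ G.Adj u v) := by
  obtain ⟨φ, α, hφ⟩ := h
  obtain ⟨u, -, hmax⟩ := Finset.exists_max_image Finset.univ φ ⟨Classical.arbitrary V,
    Finset.mem_univ _⟩
  by_cases hdom : ∀ v, v ≠ u → G.Adj u v
  · exact Or.inl ⟨u, hdom⟩
  · push_neg at hdom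
    obtain ⟨x, hxu, hnadj⟩ := hdom
    refine Or.inr ⟨x, fun y hadj => ?_⟩
    have h1 : α ≤ φ x + φ y := (hφ x y hadj.ne).mp hadj
    have h2 : φ y ≤ φ u := hmax y (Finset.mem_univ y)
    exact hnadj ((hφ u x (fun hh => hxu hh.symm)).mpr (by linarith))

lemma threshold_del {m : ℕ} {u : Fin (m+1)} {G : SimpleGraph (Fin (m+1))}
    (h : IsThreshold G) : IsThreshold (Gdel u G) := by
  obtain ⟨φ, α, hφ⟩ := h
  exact ⟨fun j => φ (u.succAbove j), α, fun i j hij =>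
    hφ _ _ (fun hh => hij (Fin.succAbove_right_injective hh))⟩

end dichotomy

/-- The master counting formula for rooted colored spanning forests of threshold graphs. -/
lemma main_count : ∀ (m : ℕ) (G : SimpleGraph (Fin (m+1))) (inst : DecidableRel G.Adj),
    IsThreshold G → ∀ t, Nat.card (CfgSet G t) =
      t * ∏ i ∈ Finset.Icc 1 m,
        ((Finset.univ.filter fun v => i ≤ G.degree v).card + t) := by
  intro m
  induction m with
  | zero =>
    intro G inst hG t
    rw [show Finset.Icc 1 0 = ∅ from rfl, Finset.prod_empty, Nat.mul_one]
    have e : ↥(CfgSet G t) ≃ Fin t := {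
      toFun := fun pg => pg.1.2 0
      invFun := fun c => ⟨(id, fun _ => c), fun v => Or.inl rfl, fun v => ⟨0, rfl⟩,
        fun v => rfl⟩
      left_inv := by
        rintro ⟨⟨p, γ⟩, hadj, hgood, hcol⟩
        haveI : Subsingleton (Fin (0+1)) := ⟨fun a b => Fin.ext (by omega)⟩
        apply Subtype.ext
        refine Prod.ext ?_ ?_ <;> funext v
        · exact (Subsingleton.elim _ _ : (id v : Fin (0+1)) = p v)
        · exact congrArg γ (Subsingleton.elim _ _)
      right_inv := fun c => rfl }
    rw [Nat.card_congr e, Nat.card_eq_fintype_card, Fintype.card_fin]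
  | succ m ih =>
    intro G inst hG t
    rcases threshold_dichotomy hG with ⟨u, hu⟩ | ⟨u, hu⟩
    · -- dominating vertex
      have hB := ih (Gdel u G) inferInstance (threshold_del hG) (t+1)
      have key := card_cdom (t := t) hu
      rw [hB] at key
      have hprod : ∏ i ∈ Finset.Icc 1 (m+1),
          ((Finset.univ.filter fun v => i ≤ G.degree v).card + t)
          = (m + 2 + t) * ∏ j ∈ Finset.Icc 1 m,
            ((Finset.univ.filter fun v => j ≤ (Gdel u G).degree v).card + (t+1)) := by
        have hins : Finset.Icc 1 (m+1) = insert 1 (Finset.Icc 2 (m+1)) := by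
          ext x
          simp only [Finset.mem_Icc, Finset.mem_insert]
          omega
        rw [hins, Finset.prod_insert (by simp)]
        have h1 : (Finset.univ.filter fun v => 1 ≤ G.degree v).card = m + 2 := by
          have : (Finset.univ.filter fun v : Fin (m+2) => 1 ≤ G.degree v)
              = Finset.univ := by
            ext v
            simp only [Finset.mem_filter, Finset.mem_univ, true_and, iff_true]
            rw [Nat.succ_le_iff, SimpleGraph.degree_pos_iff_exists_adj]
            rcases up_cases (u := u) v with rfl | ⟨j, rfl⟩
            · exact ⟨u.succAbove 0, (hu _ (Fin.succAbove_ne u 0))⟩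
            · exact ⟨u, (hu _ (Fin.succAbove_ne u j)).symm⟩
          rw [this, Finset.card_univ, Fintype.card_fin]
        rw [h1]
        congr 1
        refine Finset.prod_nbij' (fun i => i - 1) (fun j => j + 1) ?_ ?_ ?_ ?_ ?_
        · intro i hi
          simp only [Finset.mem_Icc] at hi ⊢
          omega
        · intro j hj
          simp only [Finset.mem_Icc] at hj ⊢
          omega
        · intro i hi
          simp only [Finset.mem_Icc] at hi
          omega
        · intro j hj
          simp only [Finset.mem_Icc] at hj
          omega
        · intro i hi
          simp only [Finset.mem_Icc] at hi
          rw [dstar_dom hu (by omega) (by omega : i ≤ m + 1)]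
          omega
      apply Nat.eq_of_mul_eq_mul_right (show 0 < t + 1 by omega)
      rw [key, hprod]
      ring
    · -- isolated vertex
      have hB := ih (Gdel u G) inferInstance (threshold_del hG) t
      have key := card_ciso (t := t) hu
      rw [hB] at key
      rw [key, Finset.prod_Icc_succ_top (by omega : 1 ≤ m + 1)]
      rw [dstar_iso_top hu (by omega)]
      have : ∏ i ∈ Finset.Icc 1 m, ((Finset.univ.filter fun v => i ≤ G.degree v).card + t)
          = ∏ i ∈ Finset.Icc 1 m,
            ((Finset.univ.filter fun v => i ≤ (Gdel u G).degree v).card + t) := by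
        refine Finset.prod_congr rfl ?_
        intro i hi
        rw [Finset.mem_Icc] at hi
        rw [dstar_iso hu (by omega)]
      rw [this]
      ring

section trees
open SimpleGraph Walk
variable {V : Type*} [Fintype V] [DecidableEq V] {G : SimpleGraph V} {u : V}

/-- the graph determined by a parent map -/
def graphOf (p : V → V) : SimpleGraph V where
  Adj a b := a ≠ b ∧ (p a = b ∨ p b = a)
  symm := ⟨by rintro a b ⟨h1, h2⟩; exact ⟨h1.symm, h2.symm⟩⟩
  loopless := ⟨fun a h => h.1 rfl⟩

lemma graphOf_adj {p : V → V} {a b : V} :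
    (graphOf p).Adj a b ↔ a ≠ b ∧ (p a = b ∨ p b = a) := Iff.rfl

section withp
variable {p : V → V} (hadj : ∀ v, p v = v ∨ G.Adj v (p v)) (hpu : p u = u)
  (hreach : ∀ v, ∃ k, p^[k] v = u)

lemma pgood (hpu : p u = u) (hreach : ∀ v, ∃ k, p^[k] v = u) (v : V) :
    ∃ k, p (p^[k] v) = p^[k] v := by
  obtain ⟨k, hk⟩ := hreach v
  exact ⟨k, by rw [hk, hpu]⟩

lemma pne (hpu : p u = u) (hreach : ∀ v, ∃ k, p^[k] v = u) {v : V} (hv : v ≠ u) :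
    p v ≠ v := by
  intro h
  obtain ⟨k, hk⟩ := hreach v
  rw [reaches_fixed h] at hk
  exact hv hk

lemma graphOf_le (hadj : ∀ v, p v = v ∨ G.Adj v (p v)) : graphOf p ≤ G := by
  rintro a b ⟨hne, h | h⟩
  · rcases hadj a with h' | h'
    · exact absurd (h'.symm.trans h) hne
    · rw [← h]; exact h'
  · rcases hadj b with h' | h'
    · exact absurd (h.symm.trans h') hne
    · rw [← h]; exact h'.symm

lemma graphOf_adj_parent (hpu : p u = u) (hreach : ∀ v, ∃ k, p^[k] v = u)
    {v : V} (hv : v ≠ u) : (graphOf p).Adj v (p v) :=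
  ⟨(pne hpu hreach hv).symm, Or.inl rfl⟩

/-- paths to the root in the graph of a parent map -/
lemma exists_walk (hpu : p u = u) (hreach : ∀ v, ∃ k, p^[k] v = u) :
    ∀ (k : ℕ) (v : V), p^[k] v = u →
      ∃ w : (graphOf p).Walk v u, w.IsPath ∧ (∀ x, x ∈ w.support → ∃ i, p^[i] v = x) ∧
        (v ≠ u → w.getVert 1 = p v) := by
  intro k
  induction k with
  | zero =>
    intro v hv
    simp only [Function.iterate_zero, id_eq] at hv
    subst hv
    refine ⟨Walk.nil, Walk.IsPath.nil, ?_, fun h => absurd rfl h⟩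
    intro x hx
    rw [Walk.support_nil, List.mem_singleton] at hx
    exact ⟨0, by simp [hx]⟩
  | succ k ih =>
    intro v hv
    by_cases hvu : v = u
    · subst hvu
      refine ⟨Walk.nil, Walk.IsPath.nil, ?_, fun h => absurd rfl h⟩
      intro x hx
      rw [Walk.support_nil, List.mem_singleton] at hx
      exact ⟨0, by simp [hx]⟩
    · rw [Function.iterate_succ_apply] at hv
      obtain ⟨w', hw'path, hw'sup, _⟩ := ih (p v) hv
      refine ⟨Walk.cons (graphOf_adj_parent hpu hreach hvu) w', ?_, ?_, ?_⟩
      · rw [Walk.cons_isPath_iff]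
        refine ⟨hw'path, fun hmem => ?_⟩
        obtain ⟨i, hi⟩ := hw'sup v hmem
        have : p^[i+1] v = v := by rw [Function.iterate_succ_apply]; exact hi
        exact pne hpu hreach hvu (fixed_of_cycle (pgood hpu hreach v) this (by omega))
      · intro x hx
        rw [Walk.support_cons, List.mem_cons] at hx
        rcases hx with rfl | hx
        · exact ⟨0, rfl⟩
        · obtain ⟨i, hi⟩ := hw'sup x hx
          exact ⟨i + 1, by rw [Function.iterate_succ_apply]; exact hi⟩
      · intro _
        rw [Walk.getVert_cons _ _ one_ne_zero, Nat.sub_self, Walk.getVert_zero]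

lemma graphOf_connected (hpu : p u = u) (hreach : ∀ v, ∃ k, p^[k] v = u) :
    (graphOf p).Connected := by
  have hwalk : ∀ v, (graphOf p).Reachable v u := by
    intro v
    obtain ⟨k, hk⟩ := hreach v
    obtain ⟨w, -, -, -⟩ := exists_walk hpu hreach k v hk
    exact w.reachable
  haveI : Nonempty V := ⟨u⟩
  exact SimpleGraph.Connected.mk (fun a b => (hwalk a).trans (hwalk b).symm)

lemma graphOf_bridge (hpu : p u = u) (hreach : ∀ v, ∃ k, p^[k] v = u)
    {x : V} (hx : x ≠ u) : (graphOf p).IsBridge s(x, p x) := by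
  rw [SimpleGraph.isBridge_iff_adj_and_forall_walk_mem_edges]
  have _hadjx := graphOf_adj_parent hpu hreach hx
  set S : V → Prop := fun z => ∃ k, p^[k] z = x with hS
  have hSx : S x := ⟨0, rfl⟩
  have hSpx : ¬ S (p x) := by
    rintro ⟨k, hk⟩
    have h2 : p^[k+1] x = x := by rw [Function.iterate_succ_apply]; exact hk
    exact pne hpu hreach hx (fixed_of_cycle (pgood hpu hreach x) h2 (by omega))
  have hcross : ∀ a b, (graphOf p).Adj a b → S a → ¬ S b → s(a, b) = s(x, p x) := by
    rintro a b ⟨hne, hab | hab⟩ hSa hSb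
    · rcases hSa with ⟨k, hk⟩
      rcases k with _ | k
      · simp only [Function.iterate_zero, id_eq] at hk
        subst hk
        rw [hab]
      · exfalso
        apply hSb
        refine ⟨k, ?_⟩
        rw [← hab, ← Function.iterate_succ_apply]
        exact hk
    · exfalso
      apply hSb
      obtain ⟨k, hk⟩ := hSa
      exact ⟨k + 1, by rw [Function.iterate_succ_apply, hab]; exact hk⟩
  have hwalkmem : ∀ (a b : V) (w : (graphOf p).Walk a b), S a → ¬ S b →
      s(x, p x) ∈ w.edges := by
    intro a b w
    induction w with
    | nil => intro h1 h2; exact absurd h1 h2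
    | @cons a c b hac w ih =>
      intro hSa hSb
      rw [Walk.edges_cons, List.mem_cons]
      by_cases hSc : S c
      · exact Or.inr (ih hSc hSb)
      · exact Or.inl (hcross a c hac hSa hSc).symm
  exact fun w => hwalkmem x (p x) w hSx hSpx

lemma graphOf_acyclic (hpu : p u = u) (hreach : ∀ v, ∃ k, p^[k] v = u) :
    (graphOf p).IsAcyclic := by
  rw [SimpleGraph.isAcyclic_iff_forall_adj_isBridge]
  rintro a b ⟨hne, hab | hab⟩
  · have ha : a ≠ u := by
      rintro rfl
      rw [hpu] at hab
      exact hne hab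
    rw [← hab]
    exact graphOf_bridge hpu hreach ha
  · have hb : b ≠ u := by
      rintro rfl
      rw [hpu] at hab
      exact hne hab.symm
    rw [Sym2.eq_swap, ← hab]
    exact graphOf_bridge hpu hreach hb

lemma graphOf_isTree (hpu : p u = u) (hreach : ∀ v, ∃ k, p^[k] v = u) :
    (graphOf p).IsTree :=
  ⟨graphOf_connected hpu hreach, graphOf_acyclic hpu hreach⟩

end withp
end trees

section parent
open SimpleGraph Walk
variable {V : Type*} [Fintype V] [DecidableEq V] {G : SimpleGraph V} (u : V)

/-- the parent map of a tree, rooted at `u` -/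
noncomputable def parentOf (H : SimpleGraph V) (htree : H.IsTree) : V → V :=
  fun v => ((htree.existsUnique_path v u).choose).getVert 1

variable {H : SimpleGraph V} (htree : H.IsTree)

private noncomputable def Pw (v : V) : H.Walk v u := (htree.existsUnique_path v u).choose

lemma Pw_path (v : V) : (Pw u htree v).IsPath := (htree.existsUnique_path v u).choose_spec.1

lemma Pw_uniq {v : V} (w : H.Walk v u) (hw : w.IsPath) : w = Pw u htree v :=
  (htree.existsUnique_path v u).choose_spec.2 w hw

lemma parentOf_eq (v : V) : parentOf u H htree v = (Pw u htree v).getVert 1 := rfl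

lemma Pw_u : Pw u htree u = Walk.nil := (Pw_uniq u htree Walk.nil Walk.IsPath.nil).symm

lemma parentOf_u : parentOf u H htree u = u := by
  rw [parentOf_eq, Pw_u]
  rfl

lemma parentOf_spec {v : V} (hv : v ≠ u) :
    H.Adj v (parentOf u H htree v) ∧
      (Pw u htree v).length = (Pw u htree (parentOf u H htree v)).length + 1 := by
  obtain ⟨x, hadj, q, hq⟩ := Walk.exists_eq_cons_of_ne hv (Pw u htree v)
  have hx : parentOf u H htree v = x := by
    rw [parentOf_eq, hq, Walk.getVert_cons _ _ one_ne_zero, Nat.sub_self, Walk.getVert_zero]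
  have hqpath : q.IsPath := by
    have := Pw_path u htree v
    rw [hq] at this
    exact this.of_cons
  have hqP : q = Pw u htree x := Pw_uniq u htree q hqpath
  subst hx
  exact ⟨hadj, by rw [hq, Walk.length_cons, hqP]⟩

lemma parentOf_adj {v : V} (hv : v ≠ u) : H.Adj v (parentOf u H htree v) :=
  (parentOf_spec u htree hv).1

lemma parentOf_len {v : V} (hv : v ≠ u) :
    (Pw u htree v).length = (Pw u htree (parentOf u H htree v)).length + 1 :=
  (parentOf_spec u htree hv).2

lemma parentOf_reach : ∀ v, ∃ k, (parentOf u H htree)^[k] v = u := by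
  have key : ∀ (L : ℕ) (v : V), (Pw u htree v).length ≤ L →
      ∃ k, (parentOf u H htree)^[k] v = u := by
    intro L
    induction L with
    | zero =>
      intro v hv
      have : v = u := Walk.eq_of_length_eq_zero (Nat.le_zero.mp hv)
      exact ⟨0, this⟩
    | succ L ih =>
      intro v hv
      by_cases hvu : v = u
      · exact ⟨0, hvu⟩
      · have hlen := parentOf_len u htree hvu
        obtain ⟨k, hk⟩ := ih (parentOf u H htree v) (by omega)
        exact ⟨k + 1, by rw [Function.iterate_succ_apply]; exact hk⟩
  intro v
  exact key (Pw u htree v).length v le_rfl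

lemma parentOf_mem (hle : H ≤ G) : parentOf u H htree ∈ TreeSet G u := by
  refine ⟨fun v => ?_, parentOf_u u htree, parentOf_reach u htree⟩
  by_cases hvu : v = u
  · rw [hvu]
    exact Or.inl (parentOf_u u htree)
  · exact Or.inr (hle (parentOf_adj u htree hvu))

lemma graphOf_parentOf : graphOf (parentOf u H htree) = H := by
  apply le_antisymm
  · rintro a b ⟨hne, h | h⟩
    · have ha : a ≠ u := by
        intro ha'
        rw [ha', parentOf_u] at h
        exact hne (ha'.trans h)
      rw [← h]
      exact parentOf_adj u htree ha
    · have hb : b ≠ u := by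
        intro hb'
        rw [hb', parentOf_u] at h
        exact hne (h.symm.trans hb'.symm)
      rw [← h]
      exact (parentOf_adj u htree hb).symm
  · intro a b hab
    refine ⟨hab.ne, ?_⟩
    by_cases hpa : parentOf u H htree a = b
    · exact Or.inl hpa
    · right
      by_cases hbs : b ∈ (Pw u htree a).support
      · exfalso
        set d := (Pw u htree a).dropUntil b hbs with hd
        have hdpath : d.IsPath := (Pw_path u htree a).dropUntil hbs
        have hdP : d = Pw u htree b := Pw_uniq u htree d hdpath
        have hand : a ∉ d.support := by
          have hnd := (Pw_path u htree a).support_nodup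
          rw [← Walk.take_spec (Pw u htree a) hbs, Walk.support_append] at hnd
          have hdisj := List.disjoint_of_nodup_append hnd
          intro hmem
          rw [Walk.support_eq_cons d] at hmem
          rcases List.mem_cons.mp hmem with h1 | h1
          · exact hab.ne h1
          · exact hdisj (Walk.start_mem_support _) h1
        have hcons : (Walk.cons hab (Pw u htree b)).IsPath := by
          rw [Walk.cons_isPath_iff]
          exact ⟨Pw_path u htree b, by rw [← hdP]; exact hand⟩
        have hPa := Pw_uniq u htree _ hcons
        apply hpa
        rw [parentOf_eq, ← hPa, Walk.getVert_cons _ _ one_ne_zero, Nat.sub_self, Walk.getVert_zero]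
      · have hcons : (Walk.cons hab.symm (Pw u htree a)).IsPath := by
          rw [Walk.cons_isPath_iff]
          exact ⟨Pw_path u htree a, hbs⟩
        have hPb := Pw_uniq u htree _ hcons
        rw [parentOf_eq, ← hPb, Walk.getVert_cons _ _ one_ne_zero, Nat.sub_self, Walk.getVert_zero]

end parent

section finalEquiv
open SimpleGraph
variable {V : Type*} [Fintype V] [DecidableEq V] {G : SimpleGraph V} (u : V)

/-- spanning trees are in bijection with parent maps -/
noncomputable def treeSetEquiv :
    ↥(TreeSet G u) ≃ {H : SimpleGraph V // H ≤ G ∧ H.IsTree} where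
  toFun p := ⟨graphOf p.1, graphOf_le p.2.1,
    graphOf_isTree p.2.2.1 p.2.2.2⟩
  invFun x := ⟨parentOf u x.1 x.2.2, parentOf_mem u x.2.2 x.2.1⟩
  left_inv := by
    rintro ⟨p, hadj, hpu, hreach⟩
    apply Subtype.ext
    show parentOf u (graphOf p) (graphOf_isTree hpu hreach) = p
    funext v
    by_cases hvu : v = u
    · subst hvu
      rw [parentOf_u, hpu]
    · obtain ⟨k, hk⟩ := hreach v
      obtain ⟨w, hwpath, -, hwgv⟩ := exists_walk hpu hreach k v hk
      rw [parentOf_eq, ← Pw_uniq u (graphOf_isTree hpu hreach) w hwpath, hwgv hvu]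
  right_inv := by
    rintro ⟨H, hle, htree⟩
    exact Subtype.ext (graphOf_parentOf u htree)

lemma spanningTreeCount_eq_treeSet :
    spanningTreeCount G = Nat.card (TreeSet G u) := by
  rw [spanningTreeCount, ← Nat.card_coe_set_eq]
  exact (Nat.card_congr (treeSetEquiv u)).symm

end finalEquiv

end ThresholdAux

open ThresholdAux in
theorem threshold_spanning_tree_count' (n : ℕ) (hn : 3 ≤ n)
    (G : SimpleGraph (Fin n)) [DecidableRel G.Adj] (hG : IsThreshold G) :
    spanningTreeCount G =
      ∏ i ∈ Finset.Icc 2 (n - 1),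
        (Finset.univ.filter fun v : Fin n => i ≤ G.degree v).card := by
  haveI : Nonempty (Fin n) := ⟨⟨0, by omega⟩⟩
  rcases threshold_dichotomy hG with ⟨u, hu⟩ | ⟨u, hu⟩
  · -- dominating vertex
    obtain ⟨m, rfl⟩ : ∃ m, n = m + 2 := ⟨n - 2, by omega⟩
    rw [spanningTreeCount_eq_treeSet u, Nat.card_congr (treeEquiv hu),
      main_count (m) (Gdel u G) inferInstance (threshold_del hG) 1, one_mul]
    have hsub : m + 2 - 1 = m + 1 := rfl
    rw [hsub]
    refine (Finset.prod_nbij' (fun i => i - 1) (fun j => j + 1) ?_ ?_ ?_ ?_ ?_).symm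
    · intro i hi
      simp only [Finset.mem_Icc] at hi ⊢
      omega
    · intro j hj
      simp only [Finset.mem_Icc] at hj ⊢
      omega
    · intro i hi
      simp only [Finset.mem_Icc] at hi
      omega
    · intro j hj
      simp only [Finset.mem_Icc] at hj
      omega
    · intro i hi
      simp only [Finset.mem_Icc] at hi
      rw [dstar_dom hu (by omega) (by omega : i ≤ m + 1)]
  · -- isolated vertex
    obtain ⟨m, rfl⟩ : ∃ m, n = m + 1 := ⟨n - 1, by omega⟩
    have hzero : spanningTreeCount G = 0 := by
      have hempty : {H : SimpleGraph (Fin (m+1)) | H ≤ G ∧ H.IsTree} = ∅ := by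
        ext H
        simp only [Set.mem_setOf_eq, Set.mem_empty_iff_false, iff_false, not_and]
        intro hle htree
        obtain ⟨v, hv⟩ := Fintype.exists_ne_of_one_lt_card (by
          rw [Fintype.card_fin]; omega) u
        obtain ⟨w⟩ := htree.isConnected.preconnected u v
        cases w with
        | nil => exact hv rfl
        | cons h q => exact hu _ (hle h)
      rw [spanningTreeCount, hempty, Set.ncard_empty]
    rw [hzero]
    symm
    apply Finset.prod_eq_zero (i := m)
    · rw [Finset.mem_Icc]
      omega
    · exact dstar_iso_top hu (by omega)
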